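/- Let F ∈ (C(X), τ_𝓑)* and suppose |F(f)| ≤ ρ_B(f) for all f ∈ C(X), where B ∈ 𝓑 is closed. Then there exists a unique bounded linear functional F_B on (C_b(B), ‖·‖_∞) such that F_B(f|_B) = F(f) for all f ∈ C(X) with sup_{x∈B}|f(x)| < ∞, and ‖F_B‖ ≤ 1. -/

import Mathlib

open Set Filter ENNReal

def IsBorn {X : Type*} [MetricSpace X] (𝓑 : Set (Set X)) : Prop :=
  (∀ x : X, ∃ B ∈ 𝓑, x ∈ B) ∧
  (∀ A B : Set X, A ∈ 𝓑 → B ∈ 𝓑 → A ∪ B ∈ 𝓑) ∧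
  (∀ A B : Set X, B ∈ 𝓑 → A ⊆ B → A.Nonempty → A ∈ 𝓑)

def topOfBorn {X : Type*} [MetricSpace X] (𝓑 : Set (Set X)) : TopologicalSpace C(X, ℝ) :=
  TopologicalSpace.mkOfNhds fun f =>
    ⨅ B ∈ 𝓑, ⨅ ε : {e : ℝ // 0 < e}, 𝓟 {g : C(X, ℝ) | ∀ x ∈ B, |f x - g x| < ε.1}

/-- The extended seminorm `ρ_B(f) = sup_{x ∈ B} |f x|`. -/
noncomputable def rhoB {X : Type*} [MetricSpace X] (B : Set X) (f : C(X, ℝ)) : ℝ≥0∞ :=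
  ⨆ x ∈ B, (‖f x‖₊ : ℝ≥0∞)

/-- Restriction of a continuous function which is bounded on `B` to a bounded continuous
function on `B`. -/
noncomputable def restrictBCF {X : Type*} [MetricSpace X] (B : Set X) (f : C(X, ℝ))
    (hf : ∃ M : ℝ, ∀ x ∈ B, |f x| ≤ M) : BoundedContinuousFunction B ℝ :=
  BoundedContinuousFunction.mkOfBound (ContinuousMap.restrict B f)
    (2 * hf.choose) (by
      have hM := hf.choose_spec
      set M := hf.choose with hMdef
      intro x y
      have hx := hM x.1 x.2
      have hy := hM y.1 y.2
      simp only [ContinuousMap.restrict_apply, Real.dist_eq]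
      calc |f x.1 - f y.1| ≤ |f x.1| + |f y.1| := abs_sub _ _
        _ ≤ M + M := add_le_add hx hy
        _ = 2 * M := by ring)

/-- if `F ∈ (C(X), τ_𝓑)*` satisfies `|F f| ≤ ρ_B f` for all `f`, where
`B ∈ 𝓑` is closed, then there is a unique bounded linear functional `F_B` on
`(C_b(B), ‖·‖_∞)` with `F_B (f|_B) = F f` for all `f` bounded on `B`, and `‖F_B‖ ≤ 1`. -/
theorem exists_unique_restricted_functional {X : Type*} [MetricSpace X]
    (𝓑 : Set (Set X)) (h𝓑 : IsBorn 𝓑) (B : Set X) (hB𝓑 : B ∈ 𝓑) (hBcl : IsClosed B)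
    (F : C(X, ℝ) →ₗ[ℝ] ℝ) (hF : @Continuous C(X, ℝ) ℝ (topOfBorn 𝓑) _ F)
    (hbound : ∀ f : C(X, ℝ), (‖F f‖₊ : ℝ≥0∞) ≤ rhoB B f) :
    ∃! FB : BoundedContinuousFunction B ℝ →L[ℝ] ℝ,
      (∀ (f : C(X, ℝ)) (hf : ∃ M : ℝ, ∀ x ∈ B, |f x| ≤ M),
        FB (restrictBCF B f hf) = F f) ∧ ‖FB‖ ≤ 1 := by
  classical
  -- if f vanishes on B then F f = 0
  have hzero : ∀ f : C(X, ℝ), (∀ x ∈ B, f x = 0) → F f = 0 := by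
    intro f hf
    have h := hbound f
    have : rhoB B f = 0 := by
      simp only [rhoB]
      refine le_antisymm ?_ zero_le
      refine iSup₂_le fun x hx => ?_
      simp [hf x hx]
    rw [this, nonpos_iff_eq_zero, ENNReal.coe_eq_zero, nnnorm_eq_zero] at h
    exact h
  -- F f depends only on f|_B
  have hcongr : ∀ f g : C(X, ℝ), (∀ x ∈ B, f x = g x) → F f = F g := by
    intro f g hfg
    have : F (f - g) = 0 := hzero _ (by intro x hx; simp [hfg x hx])
    have := this
    rw [map_sub] at this
    linarith
  -- Tietze extension: choice of extension for each g
  have hext : ∀ g : BoundedContinuousFunction B ℝ,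
      ∃ f : BoundedContinuousFunction X ℝ, ‖f‖ = ‖g‖ ∧ f.restrict B = g :=
    fun g => BoundedContinuousFunction.exists_norm_eq_restrict_eq_of_closed g hBcl
  set ext : BoundedContinuousFunction B ℝ → BoundedContinuousFunction X ℝ :=
    fun g => (hext g).choose with hextdef
  have hext_norm : ∀ g, ‖ext g‖ = ‖g‖ := fun g => (hext g).choose_spec.1
  have hext_restrict : ∀ g, ∀ x, ∀ hx : x ∈ B, (ext g) x = g ⟨x, hx⟩ := by
    intro g x hx
    have := (hext g).choose_spec.2
    have := congrArg (fun h => h ⟨x, hx⟩) this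
    exact this
  -- key: F f = F (ext g) whenever f agrees with g on B
  have hkey : ∀ (g : BoundedContinuousFunction B ℝ) (f : C(X, ℝ)),
      (∀ x (hx : x ∈ B), f x = g ⟨x, hx⟩) → F f = F (ext g).toContinuousMap := by
    intro g f hfg
    apply hcongr
    intro x hx
    rw [hfg x hx]
    exact (hext_restrict g x hx).symm
  -- the linear map
  let φ : BoundedContinuousFunction B ℝ →ₗ[ℝ] ℝ :=
    { toFun := fun g => F (ext g).toContinuousMap
      map_add' := by
        intro g h
        have : F (ext (g + h)).toContinuousMap
            = F ((ext g).toContinuousMap + (ext h).toContinuousMap) := by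
          apply hcongr
          intro x hx
          show (ext (g + h)) x = (ext g) x + (ext h) x
          rw [hext_restrict (g + h) x hx, hext_restrict g x hx, hext_restrict h x hx]
          simp
        show F (ext (g + h)).toContinuousMap
            = F (ext g).toContinuousMap + F (ext h).toContinuousMap
        rw [this, map_add]
      map_smul' := by
        intro c g
        have : F (ext (c • g)).toContinuousMap = F (c • (ext g).toContinuousMap) := by
          apply hcongr
          intro x hx
          show (ext (c • g)) x = c • (ext g) x
          rw [hext_restrict (c • g) x hx, hext_restrict g x hx]
          simp
        show F (ext (c • g)).toContinuousMap = c • F (ext g).toContinuousMap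
        rw [this, map_smul] }
  have hφbound : ∀ g : BoundedContinuousFunction B ℝ, ‖φ g‖ ≤ 1 * ‖g‖ := by
    intro g
    rw [one_mul]
    have h1 : (‖F (ext g).toContinuousMap‖₊ : ℝ≥0∞) ≤ rhoB B (ext g).toContinuousMap :=
      hbound _
    have h2 : rhoB B (ext g).toContinuousMap ≤ (‖g‖₊ : ℝ≥0∞) := by
      simp only [rhoB]
      refine iSup₂_le fun x hx => ?_
      rw [ENNReal.coe_le_coe]
      have : ((ext g).toContinuousMap : C(X,ℝ)) x = g ⟨x, hx⟩ := hext_restrict g x hx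
      rw [this]
      exact g.nnnorm_coe_le_nnnorm _
    have := le_trans h1 h2
    rw [ENNReal.coe_le_coe] at this
    exact_mod_cast this
  refine ⟨LinearMap.mkContinuous φ 1 hφbound, ⟨?_, ?_⟩, ?_⟩
  · intro f hf
    show φ (restrictBCF B f hf) = F f
    have : F f = F (ext (restrictBCF B f hf)).toContinuousMap := by
      apply hkey
      intro x hx
      rfl
    exact this.symm
  · exact LinearMap.mkContinuous_norm_le φ zero_le_one hφbound
  · intro FB' ⟨hFB', _⟩
    ext g
    have hgb : ∃ M : ℝ, ∀ x ∈ B, |(ext g).toContinuousMap x| ≤ M :=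
      ⟨‖ext g‖, fun x _ => by
        simpa [Real.norm_eq_abs] using (ext g).norm_coe_le_norm x⟩
    have heq : restrictBCF B (ext g).toContinuousMap hgb = g := by
      ext x
      show (ext g) x.1 = g x
      have := hext_restrict g x.1 x.2
      simpa using this
    have h1 := hFB' (ext g).toContinuousMap hgb
    rw [heq] at h1
    rw [h1]
    show F (ext g).toContinuousMap = φ g
    rfl
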